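/- Fix integers K ≥ 2, T ≥ 2K and n with 1 ≤ n ≤ T, a partition C_1, …, C_κ of [K] into κ nonempty sets ('cliques'), a real η with 0 < η ≤ 1/(4κ), and set ε = max{2η, 1/T}. For t ≥ 1 define p̂_t ∈ Δ(K) by p̂_{t,i} = exp(−η·Σ_{τ=1}^{t−1} ℓ̂_{τ,i}) / Σ_{i'=1}^K exp(−η·Σ_{τ=1}^{t−1} ℓ̂_{τ,i'}), and define p_t ∈ Δ(K) by setting to zero every coordinate of p̂_t lying in a clique C_j with Σ_{i∈C_j} p̂_{t,i} ≤ ε, and renormalizing the remaining coordinates to sum to 1 (at least one clique always survives since κ·ε ≤ 1/2 < 1). Assume the loss estimates satisfy, for every t ∈ [n] and i ∈ [K]: ℓ̂_{t,i} = 0 whenever p_{t,i} = 0, and 0 ≤ ℓ̂_{t,i} ≤ 1/(Σ_{i'∈C_j} p_{t,i'}) whenever p_{t,i} > 0 and i ∈ C_j. Then Σ_{t=1}^n ⟨p_t, ℓ̂_t⟩ − min_{i∈[K]} Σ_{t=1}^n ℓ̂_{t,i} ≤ 2·ln K/η + 8ηκ·min_{i∈[K]} Σ_{t=1}^n ℓ̂_{t,i}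 + 10κ·ln(KT) + (2K/T)·min_{i∈[K]} Σ_{t=1}^n ℓ̂_{t,i}. -/

import Mathlib

open Finset

private lemma exp_neg_le_quad {x : ℝ} (hx : 0 ≤ x) : Real.exp (-x) ≤ 1 - x + x ^ 2 := by
  rcases le_or_gt x 1 with h | h
  · have hb := Real.exp_bound (x := -x) (by rwa [abs_neg, abs_of_nonneg hx]) (n := 2) (by norm_num)
    rw [abs_neg, abs_of_nonneg hx] at hb
    simp [Finset.sum_range_succ] at hb
    have := abs_le.1 hb
    nlinarith [sq_nonneg x]
  · have h1 : Real.exp (-x) ≤ Real.exp (-1) := Real.exp_le_exp.2 (by linarith)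
    have h2 : Real.exp (-1) < 3/4 := by
      rw [Real.exp_neg]
      have he := Real.exp_one_gt_d9
      rw [inv_lt_iff_one_lt_mul₀ (by positivity)]
      nlinarith
    nlinarith [sq_nonneg (x - 1)]

private lemma sum_Icc_telescope (f : ℕ → ℝ) (N : ℕ) :
    ∑ t ∈ Finset.Icc 1 N, (f (t + 1) - f t) = f (N + 1) - f 1 := by
  induction N with
  | zero => simp
  | succ N ih => rw [Finset.sum_Icc_succ_top (by omega)]; rw [ih]; ring

private lemma step_bound {α : Type*} (s : Finset α) (u g : α → ℝ) (η : ℝ) (hη : 0 ≤ η)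
    (hu : ∀ i ∈ s, 0 ≤ u i) (hg0 : ∀ i ∈ s, 0 ≤ g i) :
    ∑ i ∈ s, u i * Real.exp (-(η * g i)) ≤
      (∑ i ∈ s, u i) - η * (∑ i ∈ s, u i * g i) + η ^ 2 * (∑ i ∈ s, u i * g i ^ 2) := by
  have key : ∀ i ∈ s, u i * Real.exp (-(η * g i)) ≤ u i * (1 - η * g i + (η * g i) ^ 2) := by
    intro i hi
    exact mul_le_mul_of_nonneg_left (exp_neg_le_quad (mul_nonneg hη (hg0 i hi))) (hu i hi)
  calc ∑ i ∈ s, u i * Real.exp (-(η * g i)) ≤ ∑ i ∈ s, u i * (1 - η * g i + (η * g i) ^ 2) :=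
        Finset.sum_le_sum key
    _ = (∑ i ∈ s, u i) - η * (∑ i ∈ s, u i * g i) + η ^ 2 * (∑ i ∈ s, u i * g i ^ 2) := by
        rw [Finset.mul_sum, Finset.mul_sum, ← Finset.sum_sub_distrib, ← Finset.sum_add_distrib]
        exact Finset.sum_congr rfl fun i hi => by ring

set_option maxHeartbeats 1600000 in
/-- Single-epoch guarantee for clipped exponential weights over a clique
partition (Lemma 6, 'epoch', in Appendix D of the paper). -/
theorem stmt11 (K T n κ : ℕ) (hK : 2 ≤ K) (hT : 2 * K ≤ T)
    (hn1 : 1 ≤ n) (hnT : n ≤ T) (hκ : 1 ≤ κ)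
    (cl : Fin K → Fin κ) (hcl : Function.Surjective cl)
    (η ε : ℝ) (hη0 : 0 < η) (hη : η ≤ 1 / (4 * (κ : ℝ)))
    (hε : ε = max (2 * η) (1 / (T : ℝ)))
    (ℓ phat q p : ℕ → Fin K → ℝ)
    (hphat : ∀ t ∈ Finset.Icc 1 n, ∀ i, phat t i =
      Real.exp (-η * ∑ τ ∈ Finset.Icc 1 (t - 1), ℓ τ i)
        / ∑ i', Real.exp (-η * ∑ τ ∈ Finset.Icc 1 (t - 1), ℓ τ i'))
    (hq : ∀ t ∈ Finset.Icc 1 n, ∀ i, q t i =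
      if ε < ∑ i' ∈ univ.filter (fun i' => cl i' = cl i), phat t i'
      then phat t i else 0)
    (hp : ∀ t ∈ Finset.Icc 1 n, ∀ i, p t i = q t i / ∑ i', q t i')
    (hℓ0 : ∀ t ∈ Finset.Icc 1 n, ∀ i, 0 ≤ ℓ t i)
    (hℓz : ∀ t ∈ Finset.Icc 1 n, ∀ i, p t i = 0 → ℓ t i = 0)
    (hℓb : ∀ t ∈ Finset.Icc 1 n, ∀ i, 0 < p t i →
      ℓ t i ≤ 1 / ∑ i' ∈ univ.filter (fun i' => cl i' = cl i), p t i') :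
    ∑ t ∈ Finset.Icc 1 n, ∑ i, p t i * ℓ t i
        - (⨅ i : Fin K, ∑ t ∈ Finset.Icc 1 n, ℓ t i) ≤
      2 * Real.log K / η
        + 8 * η * (κ : ℝ) * (⨅ i : Fin K, ∑ t ∈ Finset.Icc 1 n, ℓ t i)
        + 10 * (κ : ℝ) * Real.log ((K : ℝ) * T)
        + (2 * (K : ℝ) / T) * (⨅ i : Fin K, ∑ t ∈ Finset.Icc 1 n, ℓ t i) := by
  haveI : NeZero K := ⟨by omega⟩
  haveI : NeZero κ := ⟨by omega⟩
  -- basic numeric facts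
  have hK0 : (0:ℝ) < K := by positivity
  have hK1 : (1:ℝ) ≤ K := by exact_mod_cast hK.trans' (by norm_num)
  have hT4 : (4:ℕ) ≤ T := by omega
  have hT0 : (0:ℝ) < T := by
    have h : (0:ℕ) < T := by omega
    exact_mod_cast h
  have hκ0 : (0:ℝ) < κ := by
    have h : (0:ℕ) < κ := hκ
    exact_mod_cast h
  have hκ1 : (1:ℝ) ≤ κ := by exact_mod_cast hκ
  have hκK : (κ:ℝ) ≤ K := by
    have := Fintype.card_le_of_surjective cl hcl
    simp only [Fintype.card_fin] at this
    exact_mod_cast this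
  have hηκ : η * κ ≤ 1/4 := by
    rw [le_div_iff₀ (by positivity)] at hη
    linarith
  have hε2η : 2 * η ≤ ε := hε ▸ le_max_left _ _
  have hεT : 1 / (T:ℝ) ≤ ε := hε ▸ le_max_right _ _
  have hε0 : 0 < ε := lt_of_lt_of_le (by positivity) hεT
  have hκε : (κ:ℝ) * ε ≤ 1/2 := by
    have h1 : ε ≤ 1 / (2 * (κ:ℝ)) := by
      rw [hε]
      apply max_le
      · rw [le_div_iff₀ (by positivity)]; nlinarith
      · rw [div_le_div_iff₀ hT0 (by positivity)]
        have : (2:ℝ) * κ ≤ T := by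
          have : (2:ℝ) * K ≤ T := by exact_mod_cast hT
          nlinarith
        linarith
    calc (κ:ℝ) * ε ≤ (κ:ℝ) * (1 / (2 * κ)) := by nlinarith
      _ = 1/2 := by field_simp
  have hεhalf : ε ≤ 1/2 := by nlinarith [mul_nonneg hε0.le (sub_nonneg.2 hκ1)]
  have hεsum : ε ≤ 2 * η + 1 / (T:ℝ) := by
    have h1 : (0:ℝ) < 1/T := by positivity
    rw [hε]; exact max_le (by linarith) (by linarith)
  -- Lstar
  set Lstar : ℝ := ⨅ i : Fin K, ∑ t ∈ Finset.Icc 1 n, ℓ t i with hLstar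
  obtain ⟨istar, histar⟩ : ∃ i : Fin K, (∑ t ∈ Finset.Icc 1 n, ℓ t i) = Lstar :=
    exists_eq_ciInf_of_finite
  have hLstar0 : 0 ≤ Lstar := by
    rw [← histar]; exact Finset.sum_nonneg fun t ht => hℓ0 t ht istar
  -- definitions
  obtain ⟨w, hw⟩ : ∃ w : ℕ → Fin K → ℝ, w = fun t i =>
      Real.exp (-η * ∑ τ ∈ Finset.Icc 1 (t - 1), ℓ τ i) := ⟨_, rfl⟩
  obtain ⟨W, hW⟩ : ∃ W : ℕ → ℝ, W = fun t => ∑ i, w t i := ⟨_, rfl⟩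
  obtain ⟨C, hC⟩ : ∃ C : Fin κ → Finset (Fin K), C = fun j =>
      univ.filter (fun i => cl i = j) := ⟨_, rfl⟩
  obtain ⟨v, hv⟩ : ∃ v : ℕ → Fin κ → ℝ, v = fun t j => ∑ i ∈ C j, w t i := ⟨_, rfl⟩
  obtain ⟨m, hm⟩ : ∃ m : ℕ → Fin κ → ℝ, m = fun t j => ∑ i ∈ C j, phat t i := ⟨_, rfl⟩
  obtain ⟨S, hS⟩ : ∃ S : ℕ → ℝ, S = fun t => ∑ i, phat t i * ℓ t i := ⟨_, rfl⟩
  obtain ⟨M, hM⟩ : ∃ M : ℕ → ℝ, M = fun t => ∑ i, phat t i * ℓ t i ^ 2 := ⟨_, rfl⟩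
  obtain ⟨R, hR⟩ : ∃ R : ℕ → Fin κ → ℝ, R = fun t j =>
      (∑ i ∈ C j, phat t i * ℓ t i) / m t j := ⟨_, rfl⟩
  obtain ⟨Q, hQdef⟩ : ∃ Q : ℕ → ℝ, Q = fun t => ∑ i, q t i := ⟨_, rfl⟩
  -- basic positivity facts
  have hw_pos : ∀ t i, 0 < w t i := by intro t i; rw [hw]; exact Real.exp_pos _
  have hW_pos : ∀ t, 0 < W t := by
    intro t
    rw [hW]
    exact Finset.sum_pos (fun i _ => hw_pos t i) univ_nonempty
  have hphat2 : ∀ t ∈ Finset.Icc 1 n, ∀ i, phat t i = w t i / W t := by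
    intro t ht i
    simp only [hw, hW]
    exact hphat t ht i
  have hphat_pos : ∀ t ∈ Finset.Icc 1 n, ∀ i, 0 < phat t i := by
    intro t ht i
    rw [hphat2 t ht i]
    exact div_pos (hw_pos t i) (hW_pos t)
  have hphat_sum : ∀ t ∈ Finset.Icc 1 n, ∑ i, phat t i = 1 := by
    intro t ht
    have h1 : ∑ i, phat t i = (∑ i, w t i) / W t := by
      rw [Finset.sum_div]
      exact Finset.sum_congr rfl fun i _ => hphat2 t ht i
    have h2 : (∑ i, w t i) = W t := by rw [hW]
    rw [h1, h2]
    exact div_self (hW_pos t).ne'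
  -- clique facts
  have hCne : ∀ j, (C j).Nonempty := by
    intro j
    obtain ⟨i, hi⟩ := hcl j
    exact ⟨i, by rw [hC]; simp [hi]⟩
  have hCmem : ∀ j i, i ∈ C j ↔ cl i = j := by
    intro j i; rw [hC]; simp
  have hm_pos : ∀ t ∈ Finset.Icc 1 n, ∀ j, 0 < m t j := by
    intro t ht j
    rw [hm]
    exact Finset.sum_pos (fun i _ => hphat_pos t ht i) (hCne j)
  have hm_sum : ∀ t ∈ Finset.Icc 1 n, ∑ j, m t j = 1 := by
    intro t ht
    rw [← hphat_sum t ht, hm, hC]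
    exact Finset.sum_fiberwise univ cl (phat t)
  have hm_le1 : ∀ t ∈ Finset.Icc 1 n, ∀ j, m t j ≤ 1 := by
    intro t ht j
    rw [← hm_sum t ht]
    exact Finset.single_le_sum (fun j' _ => (hm_pos t ht j').le) (mem_univ j)
  -- q, Q, p facts
  have hq' : ∀ t ∈ Finset.Icc 1 n, ∀ i, q t i = if ε < m t (cl i) then phat t i else 0 := by
    intro t ht i
    simp only [hm, hC]
    exact hq t ht i
  have hQ : ∀ t ∈ Finset.Icc 1 n, Q t = ∑ j ∈ univ.filter (fun j => ε < m t j), m t j := by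
    intro t ht
    simp only [hQdef]
    have h1 : ∑ i, q t i = ∑ j, ∑ i ∈ C j, q t i := by
      rw [hC]; exact (Finset.sum_fiberwise univ cl (q t)).symm
    rw [h1]
    rw [Finset.sum_filter]
    refine Finset.sum_congr rfl fun j _ => ?_
    by_cases hs : ε < m t j
    · rw [if_pos hs, hm]
      refine Finset.sum_congr rfl fun i hi => ?_
      rw [hq' t ht i, (hCmem j i).1 hi, if_pos hs]
    · rw [if_neg hs]
      refine Finset.sum_eq_zero fun i hi => ?_
      rw [hq' t ht i, (hCmem j i).1 hi, if_neg hs]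
  have hQ1 : ∀ t ∈ Finset.Icc 1 n, Q t ≤ 1 := by
    intro t ht
    rw [hQ t ht, ← hm_sum t ht]
    exact Finset.sum_le_sum_of_subset_of_nonneg (Finset.filter_subset _ _)
      (fun j _ _ => (hm_pos t ht j).le)
  have hQ2 : ∀ t ∈ Finset.Icc 1 n, 1 - (κ:ℝ) * ε ≤ Q t := by
    intro t ht
    have hsplit := Finset.sum_filter_add_sum_filter_not univ (fun j => ε < m t j) (m t)
    rw [hm_sum t ht] at hsplit
    have hbound : ∑ j ∈ univ.filter (fun j => ¬ ε < m t j), m t j ≤ (κ:ℝ) * ε := by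
      calc ∑ j ∈ univ.filter (fun j => ¬ ε < m t j), m t j
          ≤ ∑ _j ∈ univ.filter (fun j => ¬ ε < m t j), ε :=
            Finset.sum_le_sum fun j hj => not_lt.1 (Finset.mem_filter.1 hj).2
        _ = (univ.filter (fun j => ¬ ε < m t j)).card * ε := by rw [Finset.sum_const, nsmul_eq_mul]
        _ ≤ (κ:ℝ) * ε := by
            apply mul_le_mul_of_nonneg_right _ hε0.le
            have : (univ.filter (fun j => ¬ ε < m t j)).card ≤ κ := by
              calc (univ.filter (fun j => ¬ ε < m t j)).card ≤ (univ : Finset (Fin κ)).card :=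
                    Finset.card_le_card (Finset.filter_subset _ _)
                _ = κ := by simp
            exact_mod_cast this
    rw [hQ t ht]
    linarith
  have hQ_pos : ∀ t ∈ Finset.Icc 1 n, 0 < Q t := by
    intro t ht
    have := hQ2 t ht
    linarith
  have hp' : ∀ t ∈ Finset.Icc 1 n, ∀ i, p t i = q t i / Q t := by
    intro t ht i
    simp only [hQdef]
    exact hp t ht i
  -- sum of p over a clique
  have hpC : ∀ t ∈ Finset.Icc 1 n, ∀ j, (∑ i ∈ C j, p t i) =
      (if ε < m t j then m t j else 0) / Q t := by
    intro t ht j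
    have h1 : ∑ i ∈ C j, p t i = (∑ i ∈ C j, q t i) / Q t := by
      rw [Finset.sum_div]
      exact Finset.sum_congr rfl fun i _ => hp' t ht i
    rw [h1]
    congr 1
    by_cases hs : ε < m t j
    · rw [if_pos hs, hm]
      refine Finset.sum_congr rfl fun i hi => ?_
      rw [hq' t ht i, (hCmem j i).1 hi, if_pos hs]
    · rw [if_neg hs]
      exact Finset.sum_eq_zero fun i hi => by
        rw [hq' t ht i, (hCmem j i).1 hi, if_neg hs]
  -- p positivity iff survival
  have hp_pos : ∀ t ∈ Finset.Icc 1 n, ∀ i, ε < m t (cl i) → 0 < p t i := by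
    intro t ht i hs
    rw [hp' t ht i, hq' t ht i, if_pos hs]
    exact div_pos (hphat_pos t ht i) (hQ_pos t ht)
  have hp_zero : ∀ t ∈ Finset.Icc 1 n, ∀ i, ¬ ε < m t (cl i) → p t i = 0 := by
    intro t ht i hs
    rw [hp' t ht i, hq' t ht i, if_neg hs, zero_div]
  -- loss bounds
  have hL2 : ∀ t ∈ Finset.Icc 1 n, ∀ i, ¬ ε < m t (cl i) → ℓ t i = 0 := by
    intro t ht i hs
    exact hℓz t ht i (hp_zero t ht i hs)
  have hL1 : ∀ t ∈ Finset.Icc 1 n, ∀ i, ε < m t (cl i) → ℓ t i ≤ 1 / m t (cl i) := by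
    intro t ht i hs
    have hb := hℓb t ht i (hp_pos t ht i hs)
    have hPeq : (∑ i' ∈ univ.filter (fun i' => cl i' = cl i), p t i') = m t (cl i) / Q t := by
      have := hpC t ht (cl i)
      rw [if_pos hs] at this
      rw [← this, hC]
    rw [hPeq] at hb
    have hmpos : 0 < m t (cl i) := hm_pos t ht (cl i)
    have hQpos := hQ_pos t ht
    have : 1 / (m t (cl i) / Q t) = Q t / m t (cl i) := by
      rw [one_div_div]
    rw [this] at hb
    calc ℓ t i ≤ Q t / m t (cl i) := hb
      _ ≤ 1 / m t (cl i) := (div_le_div_iff_of_pos_right hmpos).2 (hQ1 t ht)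
  have hL0' : ∀ t ∈ Finset.Icc 1 n, ∀ i, η * ℓ t i ≤ 1/2 := by
    intro t ht i
    by_cases hs : ε < m t (cl i)
    · have h1 := hL1 t ht i hs
      have hmp := hm_pos t ht (cl i)
      have h2 : 1 / m t (cl i) ≤ 1 / ε := by
        apply one_div_le_one_div_of_le hε0 hs.le
      have h3 : η * (1/ε) ≤ 1/2 := by
        rw [mul_one_div, div_le_div_iff₀ hε0 (by norm_num)]
        linarith
      calc η * ℓ t i ≤ η * (1/ε) := by
            apply mul_le_mul_of_nonneg_left (h1.trans h2) hη0.le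
        _ ≤ 1/2 := h3
    · rw [hL2 t ht i hs, mul_zero]; norm_num
  -- weight recursion
  have hwrec : ∀ t ∈ Finset.Icc 1 n, ∀ i, w (t+1) i = w t i * Real.exp (-(η * ℓ t i)) := by
    intro t ht i
    simp only [hw]
    rw [← Real.exp_add]
    congr 1
    have ht1 : 1 ≤ t := (Finset.mem_Icc.1 ht).1
    have hsplit : ∑ τ ∈ Finset.Icc 1 (t + 1 - 1), ℓ τ i
        = (∑ τ ∈ Finset.Icc 1 (t - 1), ℓ τ i) + ℓ t i := by
      have h2 : t + 1 - 1 = (t - 1) + 1 := by omega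
      rw [h2, Finset.sum_Icc_succ_top (by omega)]
      congr 2
      omega
    rw [hsplit]
    ring
  -- global step
  have hSnonneg : ∀ t ∈ Finset.Icc 1 n, 0 ≤ S t := by
    intro t ht
    rw [hS]
    exact Finset.sum_nonneg fun i _ => mul_nonneg (hphat_pos t ht i).le (hℓ0 t ht i)
  have hglobal : ∀ t ∈ Finset.Icc 1 n,
      Real.log (W (t+1)) - Real.log (W t) ≤ -(η * S t) + η^2 * M t := by
    intro t ht
    have hWt := hW_pos t
    have hWt1 := hW_pos (t+1)
    have hstep : W (t+1) ≤ W t - η * (W t * S t) + η^2 * (W t * M t) := by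
      have h1 : W (t+1) = ∑ i, w t i * Real.exp (-(η * ℓ t i)) := by
        rw [hW]
        exact Finset.sum_congr rfl fun i _ => hwrec t ht i
      have h2 := step_bound univ (w t) (ℓ t) η hη0.le
        (fun i _ => (hw_pos t i).le) (fun i _ => hℓ0 t ht i)
      have h3 : ∑ i, w t i * ℓ t i = W t * S t := by
        rw [hS, Finset.mul_sum]
        refine Finset.sum_congr rfl fun i _ => ?_
        rw [hphat2 t ht i]
        field_simp
      have h4 : ∑ i, w t i * ℓ t i ^ 2 = W t * M t := by
        rw [hM, Finset.mul_sum]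
        refine Finset.sum_congr rfl fun i _ => ?_
        rw [hphat2 t ht i]
        field_simp
      have h5 : (∑ i, w t i) = W t := by rw [hW]
      rw [h1]
      calc ∑ i, w t i * Real.exp (-(η * ℓ t i))
          ≤ (∑ i, w t i) - η * (∑ i, w t i * ℓ t i) + η^2 * (∑ i, w t i * ℓ t i ^ 2) := h2
        _ = W t - η * (W t * S t) + η^2 * (W t * M t) := by rw [h3, h4, h5]
    have hlog : Real.log (W (t+1)) - Real.log (W t) = Real.log (W (t+1) / W t) := by
      rw [Real.log_div hWt1.ne' hWt.ne']
    rw [hlog]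
    have h6 : Real.log (W (t+1) / W t) ≤ W (t+1) / W t - 1 :=
      Real.log_le_sub_one_of_pos (div_pos hWt1 hWt)
    have h7 : W (t+1) / W t - 1 ≤ -(η * S t) + η^2 * M t := by
      rw [div_sub_one hWt.ne', div_le_iff₀ hWt]
      have hring : (-(η * S t) + η^2 * M t) * W t
          = (W t - η * (W t * S t) + η^2 * (W t * M t)) - W t := by ring
      rw [hring]
      linarith
    linarith
  -- telescoping the global bound
  have htele : Real.log (W (n+1)) - Real.log (W 1)
      ≤ ∑ t ∈ Finset.Icc 1 n, (-(η * S t) + η^2 * M t) := by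
    rw [← sum_Icc_telescope (fun t => Real.log (W t)) n]
    exact Finset.sum_le_sum fun t ht => hglobal t ht
  have hW1 : W 1 = (K : ℝ) := by
    have h1 : ∀ i : Fin K, w 1 i = 1 := by
      intro i
      simp only [hw]
      norm_num
    simp [hW, h1]
  have hWn1 : -(η * Lstar) ≤ Real.log (W (n+1)) := by
    have h1 : Real.exp (-(η * Lstar)) ≤ W (n+1) := by
      have h2 : w (n+1) istar = Real.exp (-(η * Lstar)) := by
        simp only [hw, Nat.add_sub_cancel, histar]
        congr 1
        ring
      have h3 : w (n+1) istar ≤ W (n+1) := by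
        rw [hW]
        exact Finset.single_le_sum (fun i _ => (hw_pos (n+1) i).le) (mem_univ istar)
      linarith
    calc -(η * Lstar) = Real.log (Real.exp (-(η * Lstar))) := (Real.log_exp _).symm
      _ ≤ Real.log (W (n+1)) := Real.log_le_log (Real.exp_pos _) h1
  have hGLOBAL : η * (∑ t ∈ Finset.Icc 1 n, S t)
      ≤ Real.log K + η * Lstar + η^2 * (∑ t ∈ Finset.Icc 1 n, M t) := by
    have ha : ∑ t ∈ Finset.Icc 1 n, -(η * S t) = -(η * ∑ t ∈ Finset.Icc 1 n, S t) := by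
      rw [Finset.mul_sum]
      exact Finset.sum_neg_distrib _
    have hb : ∑ t ∈ Finset.Icc 1 n, η^2 * M t = η^2 * ∑ t ∈ Finset.Icc 1 n, M t :=
      (Finset.mul_sum _ _ _).symm
    have h1 : ∑ t ∈ Finset.Icc 1 n, (-(η * S t) + η^2 * M t)
        = -(η * ∑ t ∈ Finset.Icc 1 n, S t) + η^2 * (∑ t ∈ Finset.Icc 1 n, M t) := by
      rw [Finset.sum_add_distrib, ha, hb]
    rw [h1] at htele
    rw [hW1] at htele
    linarith
  -- per-clique quantities
  have hv_pos : ∀ t j, 0 < v t j := by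
    intro t j
    rw [hv]
    exact Finset.sum_pos (fun i _ => hw_pos t i) (hCne j)
  have hvW : ∀ t ∈ Finset.Icc 1 n, ∀ j, v t j = W t * m t j := by
    intro t ht j
    simp only [hv, hm]
    rw [Finset.mul_sum]
    refine Finset.sum_congr rfl fun i _ => ?_
    rw [hphat2 t ht i, eq_comm, mul_comm, div_mul_cancel₀ _ (hW_pos t).ne']
  have hRnn : ∀ t ∈ Finset.Icc 1 n, ∀ j, 0 ≤ R t j := by
    intro t ht j
    simp only [hR]
    apply div_nonneg _ (hm_pos t ht j).le
    exact Finset.sum_nonneg fun i _ => mul_nonneg (hphat_pos t ht i).le (hℓ0 t ht i)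
  have hR0 : ∀ t ∈ Finset.Icc 1 n, ∀ j, ¬ ε < m t j → R t j = 0 := by
    intro t ht j hs
    simp only [hR]
    rw [Finset.sum_eq_zero, zero_div]
    intro i hi
    have : ℓ t i = 0 := hL2 t ht i (by rwa [(hCmem j i).1 hi])
    rw [this, mul_zero]
  have hcstep : ∀ j, ∀ t ∈ Finset.Icc 1 n,
      Real.log (v (t+1) j) - Real.log (v t j) ≤ -(η/2 * R t j) := by
    intro j t ht
    have hvt := hv_pos t j
    have hvt1 := hv_pos (t+1) j
    have hvrec : v (t+1) j = ∑ i ∈ C j, w t i * Real.exp (-(η * ℓ t i)) := by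
      rw [hv]
      exact Finset.sum_congr rfl fun i _ => hwrec t ht i
    by_cases hs : ε < m t j
    · -- surviving clique
      have hmp := hm_pos t ht j
      have hstep : v (t+1) j ≤ v t j - (η/2) * (R t j * v t j) := by
        have h2 := step_bound (C j) (w t) (ℓ t) η hη0.le
          (fun i _ => (hw_pos t i).le) (fun i _ => hℓ0 t ht i)
        have hsq : ∑ i ∈ C j, w t i * ℓ t i ^ 2
            ≤ (1 / m t j) * ∑ i ∈ C j, w t i * ℓ t i := by
          rw [Finset.mul_sum]
          refine Finset.sum_le_sum fun i hi => ?_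
          have hle : ℓ t i ≤ 1 / m t j := by
            have := hL1 t ht i (by rwa [(hCmem j i).1 hi])
            rwa [(hCmem j i).1 hi] at this
          have := mul_le_mul_of_nonneg_left hle
            (mul_nonneg (hw_pos t i).le (hℓ0 t ht i))
          calc w t i * ℓ t i ^ 2 = w t i * ℓ t i * ℓ t i := by ring
            _ ≤ w t i * ℓ t i * (1 / m t j) := this
            _ = 1 / m t j * (w t i * ℓ t i) := by ring
        have hA0 : 0 ≤ ∑ i ∈ C j, w t i * ℓ t i :=
          Finset.sum_nonneg fun i _ => mul_nonneg (hw_pos t i).le (hℓ0 t ht i)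
        have hcoef : η^2 * (1 / m t j) ≤ η / 2 := by
          have hη2 : η ≤ m t j / 2 := by
            have : 2 * η ≤ m t j := le_trans hε2η hs.le
            linarith
          have hge : 2 * η ≤ m t j := le_trans hε2η hs.le
          have hmono : η * (2*η) ≤ η * m t j := mul_le_mul_of_nonneg_left hge hη0.le
          rw [mul_one_div, div_le_div_iff₀ hmp (by norm_num)]
          nlinarith [hmono]
        have hAR : ∑ i ∈ C j, w t i * ℓ t i = R t j * v t j := by
          simp only [hR]
          rw [hvW t ht j]
          have hnum : ∑ i ∈ C j, phat t i * ℓ t i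
              = (∑ i ∈ C j, w t i * ℓ t i) / W t := by
            rw [Finset.sum_div]
            refine Finset.sum_congr rfl fun i _ => ?_
            rw [hphat2 t ht i, div_mul_eq_mul_div]
          rw [hnum]
          have hWne := (hW_pos t).ne'
          have hmne := hmp.ne'
          field_simp
        have hv5 : (∑ i ∈ C j, w t i) = v t j := by rw [hv]
        rw [hvrec]
        calc ∑ i ∈ C j, w t i * Real.exp (-(η * ℓ t i))
            ≤ (∑ i ∈ C j, w t i) - η * (∑ i ∈ C j, w t i * ℓ t i)
              + η^2 * (∑ i ∈ C j, w t i * ℓ t i ^ 2) := h2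
          _ ≤ (∑ i ∈ C j, w t i) - η * (∑ i ∈ C j, w t i * ℓ t i)
              + (η/2) * (∑ i ∈ C j, w t i * ℓ t i) := by
              have h3 : η^2 * (∑ i ∈ C j, w t i * ℓ t i ^ 2)
                  ≤ η^2 * ((1 / m t j) * ∑ i ∈ C j, w t i * ℓ t i) :=
                mul_le_mul_of_nonneg_left hsq (by positivity)
              have h4 : η^2 * ((1 / m t j) * ∑ i ∈ C j, w t i * ℓ t i)
                  ≤ (η/2) * (∑ i ∈ C j, w t i * ℓ t i) := by
                rw [← mul_assoc]
                exact mul_le_mul_of_nonneg_right hcoef hA0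
              linarith
          _ = (∑ i ∈ C j, w t i) - (η/2) * (∑ i ∈ C j, w t i * ℓ t i) := by ring
          _ = v t j - (η/2) * (R t j * v t j) := by rw [hAR, hv5]
      have hlog : Real.log (v (t+1) j) - Real.log (v t j) = Real.log (v (t+1) j / v t j) :=
        (Real.log_div hvt1.ne' hvt.ne').symm
      rw [hlog]
      have h6 : Real.log (v (t+1) j / v t j) ≤ v (t+1) j / v t j - 1 :=
        Real.log_le_sub_one_of_pos (div_pos hvt1 hvt)
      have h7 : v (t+1) j / v t j - 1 ≤ -(η/2 * R t j) := by
        rw [div_sub_one hvt.ne', div_le_iff₀ hvt]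
        have hring : -(η/2 * R t j) * v t j
            = (v t j - (η/2) * (R t j * v t j)) - v t j := by ring
        rw [hring]
        linarith
      linarith
    · -- clipped clique: no change
      have hzero : ∀ i ∈ C j, ℓ t i = 0 := by
        intro i hi
        exact hL2 t ht i (by rwa [(hCmem j i).1 hi])
      have hveq : v (t+1) j = v t j := by
        rw [hvrec, hv]
        refine Finset.sum_congr rfl fun i hi => ?_
        rw [hzero i hi]
        simp
      rw [hveq, hR0 t ht j hs]
      simp
  -- per-clique total bound
  have hclique : ∀ j, ∑ t ∈ Finset.Icc 1 n, R t j
      ≤ 2/η * (Real.log K + 1/2 - Real.log ε) + 2 * Lstar := by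
    intro j
    have hlogK : 0 ≤ Real.log K := Real.log_nonneg hK1
    have hlogε : Real.log ε ≤ 0 := Real.log_nonpos hε0.le (by linarith)
    have hRHS0 : 0 ≤ 2/η * (Real.log K + 1/2 - Real.log ε) + 2 * Lstar := by
      have : (0:ℝ) ≤ 2/η := by positivity
      nlinarith
    rcases Finset.eq_empty_or_nonempty ((Finset.Icc 1 n).filter (fun t => ε < m t j)) with hA | hA
    · have hall : ∀ t ∈ Finset.Icc 1 n, R t j = 0 := by
        intro t ht
        apply hR0 t ht j
        intro hcon
        have : t ∈ (Finset.Icc 1 n).filter (fun t => ε < m t j) :=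
          Finset.mem_filter.2 ⟨ht, hcon⟩
        rw [hA] at this
        exact absurd this (Finset.notMem_empty t)
      rw [Finset.sum_eq_zero hall]
      exact hRHS0
    · set A := (Finset.Icc 1 n).filter (fun t => ε < m t j) with hAdef
      set t₀ := A.max' hA with ht₀def
      have ht₀A : t₀ ∈ A := A.max'_mem hA
      have ht₀Icc : t₀ ∈ Finset.Icc 1 n := (Finset.mem_filter.1 ht₀A).1
      have hsurv₀ : ε < m t₀ j := (Finset.mem_filter.1 ht₀A).2
      have ht₀1 : 1 ≤ t₀ := (Finset.mem_Icc.1 ht₀Icc).1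
      have ht₀n : t₀ ≤ n := (Finset.mem_Icc.1 ht₀Icc).2
      -- cut the sum at t₀
      have hcut : ∑ t ∈ Finset.Icc 1 n, R t j = ∑ t ∈ Finset.Icc 1 t₀, R t j := by
        symm
        apply Finset.sum_subset (Finset.Icc_subset_Icc_right ht₀n)
        intro t htn htc
        have htIcc := Finset.mem_Icc.1 htn
        have ht₀lt : t₀ < t := by
          rcases Finset.mem_Icc.1 htn with ⟨h1, h2⟩
          by_contra hcon
          exact htc (Finset.mem_Icc.2 ⟨h1, by omega⟩)
        apply hR0 t htn j
        intro hcon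
        have hmem : t ∈ A := Finset.mem_filter.2 ⟨htn, hcon⟩
        have := A.le_max' t hmem
        omega
      -- telescoping
      have htel2 : Real.log (v (t₀+1) j) - Real.log (v 1 j)
          ≤ ∑ t ∈ Finset.Icc 1 t₀, -(η/2 * R t j) := by
        rw [← sum_Icc_telescope (fun t => Real.log (v t j)) t₀]
        refine Finset.sum_le_sum fun t htm => ?_
        have htn : t ∈ Finset.Icc 1 n :=
          Finset.mem_Icc.2 ⟨(Finset.mem_Icc.1 htm).1, le_trans (Finset.mem_Icc.1 htm).2 ht₀n⟩
        exact hcstep j t htn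
      have hsumneg : ∑ t ∈ Finset.Icc 1 t₀, -(η/2 * R t j)
          = -(η/2 * ∑ t ∈ Finset.Icc 1 t₀, R t j) := by
        rw [Finset.mul_sum]
        exact Finset.sum_neg_distrib _
      -- upper bound on log v 1
      have hv1 : v 1 j = ((C j).card : ℝ) := by
        have h1 : ∀ i ∈ C j, w 1 i = 1 := by
          intro i _
          simp only [hw]
          norm_num
        simp only [hv]
        rw [Finset.sum_congr rfl h1]
        simp
      have hv1K : Real.log (v 1 j) ≤ Real.log K := by
        apply Real.log_le_log (hv_pos 1 j)
        rw [hv1]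
        have : (C j).card ≤ K := by
          calc (C j).card ≤ (univ : Finset (Fin K)).card := Finset.card_le_univ _
            _ = K := by simp
        exact_mod_cast this
      -- lower bound on log v (t₀+1)
      have hvlow : Real.exp (-(1/2)) * (ε * Real.exp (-(η * Lstar))) ≤ v (t₀+1) j := by
        have he1 : Real.exp (-(1/2)) * v t₀ j ≤ v (t₀+1) j := by
          have hvrec : v (t₀+1) j = ∑ i ∈ C j, w t₀ i * Real.exp (-(η * ℓ t₀ i)) := by
            rw [hv]
            exact Finset.sum_congr rfl fun i _ => hwrec t₀ ht₀Icc i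
          rw [hvrec, hv, Finset.mul_sum]
          refine Finset.sum_le_sum fun i hi => ?_
          rw [mul_comm (Real.exp (-(1/2))) (w t₀ i)]
          apply mul_le_mul_of_nonneg_left _ (hw_pos t₀ i).le
          apply Real.exp_le_exp.2
          have := hL0' t₀ ht₀Icc i
          linarith
        have he2 : ε * W t₀ ≤ v t₀ j := by
          rw [hvW t₀ ht₀Icc j, mul_comm (W t₀) (m t₀ j)]
          exact mul_le_mul_of_nonneg_right hsurv₀.le (hW_pos t₀).le
        have he3 : Real.exp (-(η * Lstar)) ≤ W t₀ := by
          have hpart : ∑ τ ∈ Finset.Icc 1 (t₀ - 1), ℓ τ istar ≤ Lstar := by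
            rw [← histar]
            apply Finset.sum_le_sum_of_subset_of_nonneg
              (Finset.Icc_subset_Icc_right (by omega))
            intro τ hτ _
            exact hℓ0 τ hτ istar
          have h2 : Real.exp (-(η * Lstar)) ≤ w t₀ istar := by
            simp only [hw]
            apply Real.exp_le_exp.2
            have : η * (∑ τ ∈ Finset.Icc 1 (t₀ - 1), ℓ τ istar) ≤ η * Lstar :=
              mul_le_mul_of_nonneg_left hpart hη0.le
            nlinarith
          have h3 : w t₀ istar ≤ W t₀ := by
            rw [hW]
            exact Finset.single_le_sum (fun i _ => (hw_pos t₀ i).le) (mem_univ istar)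
          linarith
        calc Real.exp (-(1/2)) * (ε * Real.exp (-(η * Lstar)))
            ≤ Real.exp (-(1/2)) * (ε * W t₀) := by
              apply mul_le_mul_of_nonneg_left _ (Real.exp_pos _).le
              exact mul_le_mul_of_nonneg_left he3 hε0.le
          _ ≤ Real.exp (-(1/2)) * v t₀ j := by
              apply mul_le_mul_of_nonneg_left he2 (Real.exp_pos _).le
          _ ≤ v (t₀+1) j := he1
      have hloglow : -(1/2) + Real.log ε + -(η * Lstar) ≤ Real.log (v (t₀+1) j) := by
        have h1 : Real.log (Real.exp (-(1/2)) * (ε * Real.exp (-(η * Lstar))))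
            = -(1/2) + Real.log ε + -(η * Lstar) := by
          rw [Real.log_mul (Real.exp_ne_zero _) (by positivity),
            Real.log_mul hε0.ne' (Real.exp_ne_zero _), Real.log_exp, Real.log_exp]
          ring
        rw [← h1]
        exact Real.log_le_log (by positivity) hvlow
      -- combine
      have hkey : η/2 * ∑ t ∈ Finset.Icc 1 t₀, R t j
          ≤ Real.log K + 1/2 - Real.log ε + η * Lstar := by
        rw [hsumneg] at htel2
        linarith
      rw [hcut]
      have h2η : (0:ℝ) < 2/η := by positivity
      have hηne : η ≠ 0 := hη0.ne'
      have hfinal : ∑ t ∈ Finset.Icc 1 t₀, R t j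
          = 2/η * (η/2 * ∑ t ∈ Finset.Icc 1 t₀, R t j) := by
        rw [← mul_assoc, div_mul_div_comm]
        rw [show (2:ℝ) * η / (η * 2) = 1 by field_simp [mul_comm]]
        rw [one_mul]
      rw [hfinal]
      calc 2/η * (η/2 * ∑ t ∈ Finset.Icc 1 t₀, R t j)
          ≤ 2/η * (Real.log K + 1/2 - Real.log ε + η * Lstar) :=
            mul_le_mul_of_nonneg_left hkey h2η.le
        _ = 2/η * (Real.log K + 1/2 - Real.log ε) + 2 * Lstar := by
            field_simp
  -- bound M by R
  have hMbound : ∀ t ∈ Finset.Icc 1 n, M t ≤ ∑ j, R t j := by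
    intro t ht
    simp only [hM]
    have hfib : ∑ i, phat t i * ℓ t i ^ 2 = ∑ j, ∑ i ∈ C j, phat t i * ℓ t i ^ 2 := by
      rw [hC]
      exact (Finset.sum_fiberwise univ cl _).symm
    rw [hfib]
    refine Finset.sum_le_sum fun j _ => ?_
    by_cases hs : ε < m t j
    · have hmp := hm_pos t ht j
      simp only [hR]
      rw [le_div_iff₀ hmp, Finset.sum_mul]
      refine Finset.sum_le_sum fun i hi => ?_
      have hle : ℓ t i ≤ 1 / m t j := by
        have := hL1 t ht i (by rwa [(hCmem j i).1 hi])
        rwa [(hCmem j i).1 hi] at this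
      have hlm : ℓ t i * m t j ≤ 1 := (le_div_iff₀ hmp).1 hle
      calc phat t i * ℓ t i ^ 2 * m t j = (phat t i * ℓ t i) * (ℓ t i * m t j) := by ring
        _ ≤ (phat t i * ℓ t i) * 1 := by
            apply mul_le_mul_of_nonneg_left hlm
              (mul_nonneg (hphat_pos t ht i).le (hℓ0 t ht i))
        _ = phat t i * ℓ t i := by ring
    · rw [hR0 t ht j hs]
      apply le_of_eq
      refine Finset.sum_eq_zero fun i hi => ?_
      have : ℓ t i = 0 := hL2 t ht i (by rwa [(hCmem j i).1 hi])
      rw [this]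
      ring
  have hMtotal : ∑ t ∈ Finset.Icc 1 n, M t
      ≤ (κ:ℝ) * (2/η * (Real.log K + 1/2 - Real.log ε) + 2 * Lstar) := by
    calc ∑ t ∈ Finset.Icc 1 n, M t ≤ ∑ t ∈ Finset.Icc 1 n, ∑ j, R t j :=
          Finset.sum_le_sum hMbound
      _ = ∑ j, ∑ t ∈ Finset.Icc 1 n, R t j := Finset.sum_comm
      _ ≤ ∑ _j : Fin κ, (2/η * (Real.log K + 1/2 - Real.log ε) + 2 * Lstar) :=
          Finset.sum_le_sum fun j _ => hclique j
      _ = (κ:ℝ) * (2/η * (Real.log K + 1/2 - Real.log ε) + 2 * Lstar) := by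
          rw [Finset.sum_const, nsmul_eq_mul]
          simp
  -- main second-order bound
  have hE : ∑ t ∈ Finset.Icc 1 n, S t ≤ Real.log K / η + Lstar
      + 2 * κ * (Real.log K + 1/2 - Real.log ε) + 2 * η * κ * Lstar := by
    have h1 : η^2 * (∑ t ∈ Finset.Icc 1 n, M t)
        ≤ η^2 * ((κ:ℝ) * (2/η * (Real.log K + 1/2 - Real.log ε) + 2 * Lstar)) :=
      mul_le_mul_of_nonneg_left hMtotal (by positivity)
    have h2 : η * (Real.log K / η + Lstar
        + 2 * κ * (Real.log K + 1/2 - Real.log ε) + 2 * η * κ * Lstar)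
        = Real.log K + η * Lstar
          + η^2 * ((κ:ℝ) * (2/η * (Real.log K + 1/2 - Real.log ε) + 2 * Lstar)) := by
      field_simp
      ring
    have h3 : η * (∑ t ∈ Finset.Icc 1 n, S t) ≤ η * (Real.log K / η + Lstar
        + 2 * κ * (Real.log K + 1/2 - Real.log ε) + 2 * η * κ * Lstar) := by
      rw [h2]
      linarith [hGLOBAL, h1]
    exact (mul_le_mul_iff_right₀ hη0).1 h3
  -- log facts
  have hlogK0 : 0 ≤ Real.log K := Real.log_nonneg hK1
  have hlogε2 : -Real.log ε ≤ Real.log T := by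
    have h1 : Real.log (1/(T:ℝ)) ≤ Real.log ε := Real.log_le_log (by positivity) hεT
    rw [one_div, Real.log_inv] at h1
    linarith
  have hlogT1 : 1 ≤ Real.log T := by
    rw [Real.le_log_iff_exp_le hT0]
    have h1 := Real.exp_one_lt_d9
    have h2 : (4:ℝ) ≤ T := by exact_mod_cast hT4
    linarith
  have hlogKT : Real.log ((K:ℝ) * T) = Real.log K + Real.log T :=
    Real.log_mul hK0.ne' hT0.ne'
  -- relating p·ℓ to S
  have hSQ : ∀ t ∈ Finset.Icc 1 n, ∑ i, p t i * ℓ t i = S t / Q t := by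
    intro t ht
    have h1 : ∀ i, p t i * ℓ t i = (phat t i * ℓ t i) / Q t := by
      intro i
      rw [hp' t ht i]
      by_cases hs : ε < m t (cl i)
      · rw [hq' t ht i, if_pos hs]
        ring
      · rw [hL2 t ht i hs, hq' t ht i, if_neg hs]
        simp
    rw [Finset.sum_congr rfl fun i _ => h1 i, ← Finset.sum_div]
    simp only [hS]
  have hc0 : (0:ℝ) ≤ (κ:ℝ) * ε := by positivity
  have hPL : ∀ t ∈ Finset.Icc 1 n, ∑ i, p t i * ℓ t i
      ≤ (1 + 2 * ((κ:ℝ) * ε)) * S t := by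
    intro t ht
    rw [hSQ t ht]
    have hQp := hQ_pos t ht
    have hQlow := hQ2 t ht
    have hS0 := hSnonneg t ht
    rw [div_le_iff₀ hQp]
    nlinarith [mul_le_mul_of_nonneg_left hQlow hS0,
      mul_nonneg (mul_nonneg hS0 hc0) hc0,
      mul_nonneg hS0 hc0, hκε]
  have hsum_ple : ∑ t ∈ Finset.Icc 1 n, ∑ i, p t i * ℓ t i
      ≤ (1 + 2 * ((κ:ℝ) * ε)) * ∑ t ∈ Finset.Icc 1 n, S t := by
    rw [Finset.mul_sum]
    exact Finset.sum_le_sum hPL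
  -- final numeric assembly
  have hXnn : 0 ≤ ∑ t ∈ Finset.Icc 1 n, S t := Finset.sum_nonneg hSnonneg
  have hA' : ∑ t ∈ Finset.Icc 1 n, S t ≤ Real.log K / η + Lstar
      + 2 * κ * (Real.log K + Real.log T + 1/2) + 2 * η * κ * Lstar := by
    have : 2 * (κ:ℝ) * (Real.log K + 1/2 - Real.log ε)
        ≤ 2 * κ * (Real.log K + Real.log T + 1/2) := by
      apply mul_le_mul_of_nonneg_left _ (by positivity)
      linarith
    linarith [hE]
  have hmulA : (1 + 2 * ((κ:ℝ) * ε)) * ∑ t ∈ Finset.Icc 1 n, S t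
      ≤ (1 + 2 * ((κ:ℝ) * ε)) * (Real.log K / η + Lstar
        + 2 * κ * (Real.log K + Real.log T + 1/2) + 2 * η * κ * Lstar) :=
    mul_le_mul_of_nonneg_left hA' (by positivity)
  -- piecewise bounds on the cross terms
  have hcsum : (κ:ℝ) * ε ≤ 2 * η * κ + κ / T := by
    calc (κ:ℝ) * ε ≤ (κ:ℝ) * (2 * η + 1 / T) := mul_le_mul_of_nonneg_left hεsum hκ0.le
      _ = 2 * η * κ + κ / T := by ring
  have hc1 : 2 * ((κ:ℝ) * ε) ≤ 1 := by linarith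
  have hBT0 : 0 ≤ Real.log K + Real.log T + 1/2 := by linarith
  have p1 : 2 * ((κ:ℝ) * ε) * (Real.log K / η) ≤ Real.log K / η := by
    have hnn : 0 ≤ Real.log K / η := by positivity
    nlinarith [mul_le_mul_of_nonneg_right hc1 hnn]
  have p2 : 2 * ((κ:ℝ) * ε) * Lstar ≤ (4 * η * κ + 2 * κ / T) * Lstar := by
    calc 2 * ((κ:ℝ) * ε) * Lstar ≤ 2 * (2 * η * κ + κ / T) * Lstar := by
          apply mul_le_mul_of_nonneg_right _ hLstar0
          linarith
      _ = (4 * η * κ + 2 * κ / T) * Lstar := by ring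
  have p3 : 2 * ((κ:ℝ) * ε) * (2 * κ * (Real.log K + Real.log T + 1/2))
      ≤ 2 * κ * (Real.log K + Real.log T + 1/2) := by
    have hnn : 0 ≤ 2 * (κ:ℝ) * (Real.log K + Real.log T + 1/2) := by positivity
    nlinarith [mul_le_mul_of_nonneg_right hc1 hnn]
  have p4 : 2 * ((κ:ℝ) * ε) * (2 * η * κ * Lstar) ≤ 2 * η * κ * Lstar := by
    have hnn : 0 ≤ 2 * η * (κ:ℝ) * Lstar := by positivity
    nlinarith [mul_le_mul_of_nonneg_right hc1 hnn]
  have hlog10 : 4 * (κ:ℝ) * (Real.log K + Real.log T + 1/2)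
      ≤ 10 * κ * Real.log ((K:ℝ) * T) := by
    rw [hlogKT]
    have h1 : 4 * (Real.log K + Real.log T + 1/2) ≤ 10 * (Real.log K + Real.log T) := by
      linarith
    have h2 := mul_le_mul_of_nonneg_left h1 hκ0.le
    calc 4 * (κ:ℝ) * (Real.log K + Real.log T + 1/2)
        = (κ:ℝ) * (4 * (Real.log K + Real.log T + 1/2)) := by ring
      _ ≤ (κ:ℝ) * (10 * (Real.log K + Real.log T)) := h2
      _ = 10 * κ * (Real.log K + Real.log T) := by ring
  have hKT : 2 * (κ:ℝ) / T * Lstar ≤ 2 * (K:ℝ) / T * Lstar := by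
    apply mul_le_mul_of_nonneg_right _ hLstar0
    exact (div_le_div_iff_of_pos_right hT0).2 (by linarith)
  -- conclude
  have hexp : (1 + 2 * ((κ:ℝ) * ε)) * (Real.log K / η + Lstar
        + 2 * κ * (Real.log K + Real.log T + 1/2) + 2 * η * κ * Lstar)
      = (Real.log K / η + Lstar
        + 2 * κ * (Real.log K + Real.log T + 1/2) + 2 * η * κ * Lstar)
        + 2 * ((κ:ℝ) * ε) * (Real.log K / η)
        + 2 * ((κ:ℝ) * ε) * Lstar
        + 2 * ((κ:ℝ) * ε) * (2 * κ * (Real.log K + Real.log T + 1/2))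
        + 2 * ((κ:ℝ) * ε) * (2 * η * κ * Lstar) := by ring
  have hdiv2 : 2 * Real.log K / η = 2 * (Real.log K / η) := by ring
  calc ∑ t ∈ Finset.Icc 1 n, ∑ i, p t i * ℓ t i - Lstar
      ≤ (1 + 2 * ((κ:ℝ) * ε)) * (∑ t ∈ Finset.Icc 1 n, S t) - Lstar := by
        linarith [hsum_ple]
    _ ≤ (1 + 2 * ((κ:ℝ) * ε)) * (Real.log K / η + Lstar
        + 2 * κ * (Real.log K + Real.log T + 1/2) + 2 * η * κ * Lstar) - Lstar := by
        linarith [hmulA]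
    _ ≤ 2 * Real.log K / η + 8 * η * (κ:ℝ) * Lstar
        + 10 * (κ:ℝ) * Real.log ((K:ℝ) * T) + 2 * (K:ℝ) / T * Lstar := by
        rw [hexp, hdiv2]
        linarith [p1, p2, p3, p4, hlog10, hKT]
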